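/- Let f₁(z) = ∑_{n=1}^∞ z^{2ⁿ} (the lacunary series, convergent on the open unit disk) and let θ = 2π·p/2^s for some natural numbers p and s. Then the radial segment at angle θ has finite length in the harmonic metric e^{2·Im(f₁)}g₀ on the unit disk: the function r ↦ exp(Im(∑_{n=1}^∞ (r·e^{iθ})^{2ⁿ})) is integrable on the interval (0, 1). -/

import Mathlib

open MeasureTheory

/-- For `f₁(z) = ∑_{n=1}^∞ z^{2ⁿ}` and `θ = 2π·p/2^s` a dyadic angle, the radial segment
at angle `θ` has finite length in the harmonic metric `e^{2 Im f₁}g₀`: the integrand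
`r ↦ exp(Im(f₁(r·e^{iθ})))` is integrable on `(0,1)`. -/
theorem lacunary_radial_length_finite_im (p s : ℕ) (θ : ℝ)
    (hθ : θ = 2 * Real.pi * p / 2 ^ s) :
    IntegrableOn (fun r : ℝ =>
        Real.exp ((∑' n : ℕ, ((r : ℂ) * Complex.exp (θ * Complex.I)) ^ (2 ^ (n + 1))).im))
      (Set.Ioo (0:ℝ) 1) := by
  have hg : IntegrableOn (fun r : ℝ =>
      Real.exp (∑ n ∈ Finset.range s, r ^ (2 ^ (n + 1)) * Real.sin (2 ^ (n + 1) * θ)))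
      (Set.Ioo (0:ℝ) 1) := by
    have : Continuous (fun r : ℝ =>
        Real.exp (∑ n ∈ Finset.range s, r ^ (2 ^ (n + 1)) * Real.sin (2 ^ (n + 1) * θ))) := by
      fun_prop
    exact this.integrableOn_Icc.mono_set Set.Ioo_subset_Icc_self
  refine hg.congr_fun ?_ measurableSet_Ioo
  intro r hr
  obtain ⟨hr0, hr1⟩ := hr
  -- termwise formula
  have hterm : ∀ n : ℕ, (((r : ℂ) * Complex.exp (θ * Complex.I)) ^ (2 ^ (n + 1))).im
      = r ^ (2 ^ (n + 1)) * Real.sin (2 ^ (n + 1) * θ) := by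
    intro n
    rw [mul_pow, ← Complex.exp_nat_mul]
    have h1 : ((2 ^ (n + 1) : ℕ) : ℂ) * (↑θ * Complex.I) = ↑((2 ^ (n + 1) : ℝ) * θ) * Complex.I := by
      push_cast; ring
    have h2 : ((r : ℂ)) ^ (2 ^ (n + 1)) = ((r ^ (2 ^ (n + 1)) : ℝ) : ℂ) := by push_cast; ring
    rw [h1, h2, Complex.mul_im, Complex.ofReal_re, Complex.ofReal_im,
      Complex.exp_ofReal_mul_I_im, zero_mul, add_zero]
  -- summability
  have hsum : Summable (fun n : ℕ => ((r : ℂ) * Complex.exp (θ * Complex.I)) ^ (2 ^ (n + 1))) := by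
    apply Summable.of_norm_bounded (g := fun n : ℕ => r ^ (n + 1))
    · exact (summable_geometric_of_lt_one hr0.le hr1).comp_injective (add_left_injective 1)
    · intro n
      rw [norm_pow, norm_mul, Complex.norm_exp_ofReal_mul_I,
        mul_one, Complex.norm_real, Real.norm_eq_abs, abs_of_pos hr0]
      exact pow_le_pow_of_le_one hr0.le hr1.le (Nat.lt_two_pow_self (n := n + 1)).le
  simp only []
  rw [Complex.im_tsum hsum]
  congr 1
  calc ∑ n ∈ Finset.range s, r ^ (2 ^ (n + 1)) * Real.sin (2 ^ (n + 1) * θ)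
      = ∑' n : ℕ, r ^ (2 ^ (n + 1)) * Real.sin (2 ^ (n + 1) * θ) := by
        refine (tsum_eq_sum ?_).symm
        intro n hn
        have hns : s ≤ n := by simpa using hn
        have h2 : (2:ℝ) ^ (n + 1 - s) * 2 ^ s = 2 ^ (n + 1) := by
          rw [← pow_add]; congr 1; omega
        have : (2:ℝ) ^ (n + 1) * θ = ((2 * p * 2 ^ (n + 1 - s) : ℕ) : ℝ) * Real.pi := by
          have hpow : (0:ℝ) < 2 ^ s := by positivity
          rw [hθ]; push_cast
          field_simp
          rw [← h2]; ring
        rw [this, Real.sin_nat_mul_pi, mul_zero]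
    _ = ∑' n : ℕ, (((r : ℂ) * Complex.exp (θ * Complex.I)) ^ (2 ^ (n + 1))).im := by
        exact tsum_congr fun n => (hterm n).symm
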